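/- Consider the single-sample WFLMC power-allocation program, and suppose there exists λ > 0 such that the point a* defined by a*_s = min{ ((1+γ)/2)^{−s} · η K √N₀ / (K_a √λ) , min_{k∈𝒦} P h_k²/ℓ² , η N₀ K²/(2 K_a²) } for s = 1,…,S satisfies the differential-privacy constraint with equality, Σ_{s=1}^S a*_s = N₀ R /(2 ℓ²) (the DP-limited regime). Then a* is feasible for the program and is optimal, i.e. Φ(a*) ≤ Φ(a) for every feasible point a. (Equivalently, the optimal power gain is α^{[s]}_opt = min{ ((1+γ)/2)^{−s/2}·√(η K √N₀/(K_a √λ)) , min_{k∈𝒦} √P h_k/ℓ , (K/K_a)√(η N₀/2) }.) -/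

import Mathlib

open Finset

/-- Objective Φ of the single-sample WFLMC power-allocation program,
in the variables `a s = (α^{[s]})²`, `s = 1, …, S` (indexed here by `Fin S`). -/
noncomputable def wflmcObj (S : ℕ) (η N₀ K Ka γ : ℝ) (a : Fin S → ℝ) : ℝ :=
  ∑ s : Fin S, ((1 + γ) / 2) ^ (-(2 * ((s : ℕ) + 1) : ℤ)) *
    max 0 (η ^ 2 * N₀ * K ^ 2 / (a s * Ka ^ 2) - 2 * η)

/-- Feasibility for the single-sample WFLMC power-allocation program:
positivity, per-device power constraints, the LMC-noise cap, and the
differential-privacy constraint. -/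
def wflmcFeasible {ι : Type*} (S : ℕ) (η N₀ ℓ P K Ka R : ℝ)
    (𝒦 : Finset ι) (h : ι → ℝ) (a : Fin S → ℝ) : Prop :=
  (∀ s, 0 < a s) ∧
  (∀ s, ∀ k ∈ 𝒦, a s ≤ P * (h k) ^ 2 / ℓ ^ 2) ∧
  (∀ s, a s ≤ η * N₀ * K ^ 2 / (2 * Ka ^ 2)) ∧
  (∑ s : Fin S, 2 * ℓ ^ 2 * a s / N₀ ≤ R)

/-- DP-limited regime: if there is `λ > 0` such that the waterfilling-type allocation
`a*_s = min{((1+γ)/2)^{-s} η K √N₀/(K_a √λ), min_k P h_k²/ℓ², η N₀ K²/(2K_a²)}`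
meets the differential-privacy constraint with equality, `Σ_s a*_s = N₀ R/(2ℓ²)`,
then `a*` is feasible and optimal. -/
theorem wflmc_dp_limited_regime {ι : Type*} (S : ℕ) (hS : 1 ≤ S)
    (η N₀ ℓ P K Ka R γ : ℝ)
    (hη : 0 < η) (hN₀ : 0 < N₀) (hℓ : 0 < ℓ) (hP : 0 < P)
    (hK : 1 ≤ K) (hKa : 1 ≤ Ka) (hKaK : Ka ≤ K)
    (𝒦 : Finset ι) (h𝒦 : 𝒦.Nonempty) (h : ι → ℝ) (hh : ∀ k ∈ 𝒦, 0 < h k)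
    (hR : 0 ≤ R) (hγ0 : 0 < γ) (hγ1 : γ < 1)
    (lam : ℝ) (hlam : 0 < lam) (astar : Fin S → ℝ)
    (hastar : ∀ s : Fin S, astar s =
      min (min (((1 + γ) / 2) ^ (-(((s : ℕ) + 1) : ℤ)) *
            (η * K * Real.sqrt N₀ / (Ka * Real.sqrt lam)))
          (𝒦.inf' h𝒦 fun k => P * (h k) ^ 2 / ℓ ^ 2))
        (η * N₀ * K ^ 2 / (2 * Ka ^ 2)))
    (hDPeq : ∑ s : Fin S, astar s = N₀ * R / (2 * ℓ ^ 2)) :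
    wflmcFeasible S η N₀ ℓ P K Ka R 𝒦 h astar ∧
    ∀ a : Fin S → ℝ, wflmcFeasible S η N₀ ℓ P K Ka R 𝒦 h a →
      wflmcObj S η N₀ K Ka γ astar ≤ wflmcObj S η N₀ K Ka γ a := by
  have hKa0 : (0:ℝ) < Ka := lt_of_lt_of_le one_pos hKa
  have hK0 : (0:ℝ) < K := lt_of_lt_of_le one_pos hK
  have hβ : (0:ℝ) < (1 + γ) / 2 := by linarith
  set C' : ℝ := η ^ 2 * N₀ * K ^ 2 / Ka ^ 2 with hC'
  have hC'pos : 0 < C' := by positivity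
  set cap : ℝ := η * N₀ * K ^ 2 / (2 * Ka ^ 2) with hcapdef
  have hcappos : 0 < cap := by positivity
  set m : ℝ := 𝒦.inf' h𝒦 fun k => P * (h k) ^ 2 / ℓ ^ 2 with hmdef
  have hmpos : 0 < m := by
    rw [hmdef, Finset.lt_inf'_iff]
    intro k hk
    have := hh k hk
    positivity
  set W : Fin S → ℝ := fun s => ((1 + γ) / 2) ^ (-(2 * ((s : ℕ) + 1) : ℤ)) with hWdef
  have hWpos : ∀ s, 0 < W s := fun s => zpow_pos hβ _
  set t : Fin S → ℝ := fun s => ((1 + γ) / 2) ^ (-(((s : ℕ) + 1) : ℤ)) *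
      (η * K * Real.sqrt N₀ / (Ka * Real.sqrt lam)) with htdef
  have hsN : 0 < Real.sqrt N₀ := Real.sqrt_pos.2 hN₀
  have hsl : 0 < Real.sqrt lam := Real.sqrt_pos.2 hlam
  have htpos : ∀ s, 0 < t s := by
    intro s
    have h1 : (0:ℝ) < ((1 + γ) / 2) ^ (-(((s : ℕ) + 1) : ℤ)) := zpow_pos hβ _
    have h2 : 0 < η * K * Real.sqrt N₀ / (Ka * Real.sqrt lam) := by positivity
    exact mul_pos h1 h2
  have hastar' : ∀ s, astar s = min (min (t s) m) cap := hastar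
  have hastarpos : ∀ s, 0 < astar s := by
    intro s
    rw [hastar' s]
    exact lt_min (lt_min (htpos s) hmpos) hcappos
  have hastarcap : ∀ s, astar s ≤ cap := by
    intro s; rw [hastar' s]; exact min_le_right _ _
  have hastarm : ∀ s, astar s ≤ m := by
    intro s; rw [hastar' s]
    exact le_trans (min_le_left _ _) (min_le_right _ _)
  -- squared relation
  have hsq : ∀ s : Fin S, (t s) ^ 2 * lam = W s * C' := by
    intro s
    have hzp : (((1 + γ) / 2) ^ (-(((s : ℕ) + 1) : ℤ))) ^ 2 = W s := by
      rw [hWdef, sq, ← zpow_add₀ (ne_of_gt hβ)]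
      congr 1
      ring
    have hfrac : (η * K * Real.sqrt N₀ / (Ka * Real.sqrt lam)) ^ 2 =
        η ^ 2 * K ^ 2 * N₀ / (Ka ^ 2 * lam) := by
      rw [div_pow, mul_pow, mul_pow, mul_pow, Real.sq_sqrt hN₀.le, Real.sq_sqrt hlam.le]
    rw [htdef]
    simp only
    rw [mul_pow, hzp, hfrac, hC']
    field_simp
  -- max elimination
  have hE : ∀ x : ℝ, η ^ 2 * N₀ * K ^ 2 / (x * Ka ^ 2) = C' / x := by
    intro x
    rw [hC', div_div, mul_comm x]
  have hmax : ∀ x : ℝ, 0 < x → x ≤ cap →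
      max 0 (η ^ 2 * N₀ * K ^ 2 / (x * Ka ^ 2) - 2 * η) =
        C' / x - 2 * η := by
    intro x hx hxc
    rw [hE x]
    apply max_eq_right
    rw [sub_nonneg]
    have h1 : 2 * η = C' / cap := by
      rw [hC', hcapdef]; field_simp
    rw [h1]
    gcongr
  -- core convexity inequality
  have core : ∀ (Wc x y : ℝ), 0 ≤ Wc → 0 < x → 0 < y →
      Wc / y ^ 2 * (y - x) ≤ Wc / x - Wc / y := by
    intro Wc x y hW hx hy
    rw [div_mul_eq_mul_div, div_sub_div _ _ hx.ne' hy.ne',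
      div_le_div_iff₀ (by positivity) (by positivity)]
    nlinarith [mul_nonneg (mul_nonneg hW (sq_nonneg (x - y))) (mul_pos hx hy).le,
      sq_nonneg y, mul_pos hx hy]
  -- key per-term inequality
  have key : ∀ s : Fin S, ∀ x : ℝ, 0 < x → x ≤ m → x ≤ cap →
      lam * (astar s - x) ≤ W s * C' / x - W s * C' / astar s := by
    intro s x hx hxm hxc
    have hy0 : 0 < astar s := hastarpos s
    have hWC : 0 < W s * C' := mul_pos (hWpos s) hC'pos
    have hcore := core (W s * C') x (astar s) hWC.le hx hy0
    rcases le_or_gt (t s) (min m cap) with hcase | hcase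
    · have hyt : astar s = t s := by
        rw [hastar' s, min_assoc]
        exact min_eq_left hcase
      have hl : W s * C' / (astar s) ^ 2 = lam := by
        rw [hyt, ← hsq s]
        field_simp
        exact div_self (htpos s).ne'
      calc lam * (astar s - x) = W s * C' / (astar s) ^ 2 * (astar s - x) := by rw [hl]
        _ ≤ _ := hcore
    · have hym : astar s = min m cap := by
        rw [hastar' s, min_assoc]
        exact min_eq_right hcase.le
      have hxy : x ≤ astar s := by rw [hym]; exact le_min hxm hxc
      have hyt : astar s ≤ t s := by rw [hym]; exact hcase.le
      have hlam2 : lam ≤ W s * C' / (astar s) ^ 2 := by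
        have h1 : lam = W s * C' / (t s) ^ 2 := by
          rw [← hsq s]; field_simp
          exact (div_self (htpos s).ne').symm
        rw [h1]
        gcongr
      calc lam * (astar s - x) ≤ W s * C' / (astar s) ^ 2 * (astar s - x) :=
            mul_le_mul_of_nonneg_right hlam2 (by linarith)
        _ ≤ _ := hcore
  -- feasibility
  have hDPsum : ∑ s : Fin S, 2 * ℓ ^ 2 * astar s / N₀ = R := by
    have h1 : ∑ s : Fin S, 2 * ℓ ^ 2 * astar s / N₀ =
        2 * ℓ ^ 2 / N₀ * ∑ s : Fin S, astar s := by
      rw [Finset.mul_sum]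
      exact Finset.sum_congr rfl fun s _ => by ring
    rw [h1, hDPeq]
    field_simp
  have hfeas : wflmcFeasible S η N₀ ℓ P K Ka R 𝒦 h astar := by
    refine ⟨hastarpos, ?_, hastarcap, le_of_eq hDPsum⟩
    intro s k hk
    exact le_trans (hastarm s) (Finset.inf'_le _ hk)
  refine ⟨hfeas, ?_⟩
  rintro a ⟨hapos, hadev, hacap, haDP⟩
  have haM : ∀ s, a s ≤ m := fun s =>
    Finset.le_inf' h𝒦 _ fun k hk => hadev s k hk
  have hsumle : ∑ s : Fin S, a s ≤ ∑ s : Fin S, astar s := by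
    rw [hDPeq]
    have h1 : ∑ s : Fin S, a s = N₀ / (2 * ℓ ^ 2) * ∑ s : Fin S, 2 * ℓ ^ 2 * a s / N₀ := by
      rw [Finset.mul_sum]
      refine Finset.sum_congr rfl fun s _ => ?_
      field_simp
    rw [h1]
    calc N₀ / (2 * ℓ ^ 2) * ∑ s : Fin S, 2 * ℓ ^ 2 * a s / N₀
        ≤ N₀ / (2 * ℓ ^ 2) * R := by
          exact mul_le_mul_of_nonneg_left haDP (by positivity)
      _ = N₀ * R / (2 * ℓ ^ 2) := by ring
  have main : wflmcObj S η N₀ K Ka γ astar +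
      lam * ((∑ s : Fin S, astar s) - ∑ s : Fin S, a s) ≤ wflmcObj S η N₀ K Ka γ a := by
    unfold wflmcObj
    have hlhs : (∑ s : Fin S, ((1 + γ) / 2) ^ (-(2 * ((s : ℕ) + 1) : ℤ)) *
        max 0 (η ^ 2 * N₀ * K ^ 2 / (astar s * Ka ^ 2) - 2 * η)) +
        lam * ((∑ s : Fin S, astar s) - ∑ s : Fin S, a s) =
        ∑ s : Fin S, (W s * max 0 (η ^ 2 * N₀ * K ^ 2 / (astar s * Ka ^ 2) - 2 * η)
          + lam * (astar s - a s)) := by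
      have e : lam * ((∑ s : Fin S, astar s) - ∑ s : Fin S, a s) =
          ∑ s : Fin S, lam * (astar s - a s) := by
        rw [← Finset.sum_sub_distrib, Finset.mul_sum]
      rw [e, ← Finset.sum_add_distrib]
    rw [hlhs]
    apply Finset.sum_le_sum
    intro s _
    rw [hmax (a s) (hapos s) (hacap s), hmax (astar s) (hastarpos s) (hastarcap s)]
    have hk := key s (a s) (hapos s) (haM s) (hacap s)
    have e1 : W s * (C' / a s - 2 * η) = W s * C' / a s - W s * (2 * η) := by ring
    have e2 : W s * (C' / astar s - 2 * η) = W s * C' / astar s - W s * (2 * η) := by ring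
    linarith
  have hnn : 0 ≤ lam * ((∑ s : Fin S, astar s) - ∑ s : Fin S, a s) :=
    mul_nonneg hlam.le (by linarith)
  linarith
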